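/- For the channel of Example 2, let 𝒱 be any finite set and let (S,V,X₁,X₂) have joint pmf of the product form Q_S(s₀,s₁)·P_{X₂}(x₂)·P_{X₁|X₂}(x₁|x₂)·P_{V|S,X₂}(v|s₀,s₁,x₂), where Q_S is the law of the i.i.d. pair (S₀,S₁), and let Y = (X₁ ⊕ S_{X₁⊕X₂}, X₂). If I(X₁ ; Y | V,X₂) ≥ 1, then H(X₁) = 1 (X₁ is uniform on {0,1}), X₁ is independent of the triple (S,V,X₂), and H(S_{X₁⊕X₂} | V,X₁,X₂) = 0. -/

import Mathlib

open scoped BigOperators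
open Classical

noncomputable section

/-- Probability that the random variable `X` equals `x` under the pmf `p`. -/
def pr {Ω α : Type*} [Fintype Ω] (p : Ω → ℝ) (X : Ω → α) (x : α) : ℝ :=
  ∑ ω : Ω, if X ω = x then p ω else 0

/-- Shannon entropy (in bits), with the convention `0 · log₂ 0 = 0`. -/
def ent {Ω α : Type*} [Fintype Ω] (p : Ω → ℝ) (X : Ω → α) : ℝ :=
  -∑ x ∈ Finset.univ.image X, pr p X x * Real.logb 2 (pr p X x)

/-- Conditional entropy `H(X|Y) = H(X,Y) - H(Y)`. -/
def condEnt {Ω α β : Type*} [Fintype Ω] (p : Ω → ℝ) (X : Ω → α) (Y : Ω → β) : ℝ :=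
  ent p (fun ω => (X ω, Y ω)) - ent p Y

/-- Mutual information `I(X;Y) = H(X) + H(Y) - H(X,Y)`. -/
def mi {Ω α β : Type*} [Fintype Ω] (p : Ω → ℝ) (X : Ω → α) (Y : Ω → β) : ℝ :=
  ent p X + ent p Y - ent p (fun ω => (X ω, Y ω))

/-- Conditional mutual information `I(X;Y|Z) = H(X,Z) + H(Y,Z) - H(X,Y,Z) - H(Z)`. -/
def cmi {Ω α β γ : Type*} [Fintype Ω] (p : Ω → ℝ) (X : Ω → α) (Y : Ω → β) (Z : Ω → γ) : ℝ :=
  ent p (fun ω => (X ω, Z ω)) + ent p (fun ω => (Y ω, Z ω))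
    - ent p (fun ω => (X ω, Y ω, Z ω)) - ent p Z

/-- `p` is a probability mass function on the finite sample space `Ω`. -/
def IsPMF {Ω : Type*} [Fintype Ω] (p : Ω → ℝ) : Prop :=
  (∀ ω, 0 ≤ p ω) ∧ ∑ ω : Ω, p ω = 1

/-- The random variables `X` and `Y` are independent under `p`. -/
def IndepRV {Ω α β : Type*} [Fintype Ω] (p : Ω → ℝ) (X : Ω → α) (Y : Ω → β) : Prop :=
  ∀ x y, pr p (fun ω => (X ω, Y ω)) (x, y) = pr p X x * pr p Y y

end

noncomputable section
/-! The channel of Example 2:  `𝒳₁ = 𝒳₂ = {0,1}`, state `S = (S₀,S₁)` with `S₀,S₁`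
i.i.d. Bernoulli(`p₀`) where `h₂(p₀) = 1/2`, output `Y = (X₁ ⊕ S_{X₁⊕X₂}, X₂)`. -/

/-- Binary entropy function `h₂` (in bits). -/
def binEnt (a : ℝ) : ℝ := -(a * Real.logb 2 a) - (1 - a) * Real.logb 2 (1 - a)

/-- The state pmf of Example 2: `S = (S₀,S₁)` i.i.d. Bernoulli(`p₀`). -/
def QS2 (p₀ : ℝ) : Bool × Bool → ℝ :=
  fun s => (if s.1 then p₀ else 1 - p₀) * (if s.2 then p₀ else 1 - p₀)

/-- The (deterministic) channel kernel of Example 2: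
`Y = (X₁ ⊕ S_{X₁⊕X₂}, X₂)` where `S_{X₁⊕X₂} = S₀` if `X₁ = X₂` and `S₁` otherwise. -/
def W2 : Bool × Bool → Bool → Bool → Bool × Bool → ℝ :=
  fun y x1 x2 s => if y = (Bool.xor x1 (if x1 = x2 then s.1 else s.2), x2) then 1 else 0

end


section AuxLemmas
variable {Ω α β : Type*} [Fintype Ω] {p : Ω → ℝ}

lemma pr_nonneg (hp : IsPMF p) (X : Ω → α) (a : α) : 0 ≤ pr p X a :=
  Finset.sum_nonneg fun ω _ => by split <;> simp [hp.1 ω]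

lemma pr_eq_zero (X : Ω → α) {a : α} (ha : a ∉ Finset.univ.image X) : pr p X a = 0 := by
  apply Finset.sum_eq_zero; intro ω _
  have : X ω ≠ a := fun h => ha (Finset.mem_image.2 ⟨ω, Finset.mem_univ _, h⟩)
  simp [this]

lemma sum_pr [Fintype α] (hp : IsPMF p) (X : Ω → α) : ∑ a : α, pr p X a = 1 := by
  unfold pr; rw [Finset.sum_comm]
  rw [← hp.2]; apply Finset.sum_congr rfl; intro ω _
  simp

lemma pr_comp {g : α → β} (hg : Function.Injective g) (X : Ω → α) (x : α) :
    pr p (fun ω => g (X ω)) (g x) = pr p X x := by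
  unfold pr; apply Finset.sum_congr rfl; intro ω _
  simp [hg.eq_iff]

lemma ent_comp {g : α → β} (hg : Function.Injective g) (X : Ω → α) :
    ent p (fun ω => g (X ω)) = ent p X := by
  unfold ent
  have h1 : Finset.univ.image (fun ω => g (X ω)) = (Finset.univ.image X).image g := by
    rw [Finset.image_image]; rfl
  rw [h1, Finset.sum_image (fun a _ b _ h => hg h)]
  congr 1; apply Finset.sum_congr rfl; intro a _
  rw [pr_comp hg]

lemma ent_eq [Fintype α] (X : Ω → α) :
    ent p X = -∑ a : α, pr p X a * Real.logb 2 (pr p X a) := by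
  unfold ent; congr 1
  apply Finset.sum_subset (Finset.subset_univ _)
  intro a _ ha
  rw [pr_eq_zero X ha]; simp

lemma pr_marg_right [Fintype α] (X : Ω → α) (Y : Ω → β) (y : β) :
    pr p Y y = ∑ a : α, pr p (fun ω => (X ω, Y ω)) (a, y) := by
  unfold pr; rw [Finset.sum_comm]
  apply Finset.sum_congr rfl; intro ω _
  simp only [Prod.mk.injEq]
  rw [show (fun a => if X ω = a ∧ Y ω = y then p ω else 0)
      = (fun a => if a = X ω then (if Y ω = y then p ω else 0) else 0) from ?_]
  · rw [Finset.sum_ite_eq']; simp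
  · funext a; by_cases h1 : a = X ω <;> by_cases h2 : Y ω = y <;> simp [h1, h2, eq_comm]

lemma pr_marg_left [Fintype β] (X : Ω → α) (Y : Ω → β) (x : α) :
    pr p X x = ∑ b : β, pr p (fun ω => (X ω, Y ω)) (x, b) := by
  unfold pr; rw [Finset.sum_comm]
  apply Finset.sum_congr rfl; intro ω _
  simp only [Prod.mk.injEq]
  rw [show (fun b => if X ω = x ∧ Y ω = b then p ω else 0)
      = (fun b => if b = Y ω then (if X ω = x then p ω else 0) else 0) from ?_]
  · rw [Finset.sum_ite_eq']; simp
  · funext b; by_cases h1 : b = Y ω <;> by_cases h2 : X ω = x <;> simp [h1, h2, eq_comm]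

lemma gibbs_term {q r : ℝ} (hq : 0 ≤ q) (hr : 0 ≤ r) (hpos : 0 < q → 0 < r) :
    q * (Real.logb 2 r - Real.logb 2 q) ≤ (r - q) / Real.log 2 := by
  rcases eq_or_lt_of_le hq with h | h
  · simp [← h]; positivity
  · have hr' := hpos h
    have hlog : Real.logb 2 r - Real.logb 2 q = Real.log (r / q) / Real.log 2 := by
      unfold Real.logb
      rw [Real.log_div (ne_of_gt hr') (ne_of_gt h)]; ring
    rw [hlog]
    have h2 : (0:ℝ) < Real.log 2 := Real.log_pos one_lt_two
    have hle : q * Real.log (r / q) ≤ q * (r / q - 1) :=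
      mul_le_mul_of_nonneg_left (Real.log_le_sub_one_of_pos (by positivity)) hq
    have he : q * (r / q - 1) = r - q := by field_simp
    rw [← mul_div_assoc, div_le_div_iff_of_pos_right h2]
    linarith

lemma gibbs_term_eq {q r : ℝ} (hq : 0 ≤ q) (hr : 0 ≤ r) (hpos : 0 < q → 0 < r)
    (heq : q * (Real.logb 2 r - Real.logb 2 q) = (r - q) / Real.log 2) : q = r := by
  rcases eq_or_lt_of_le hq with h | h
  · have h2 : Real.log 2 ≠ 0 := ne_of_gt (Real.log_pos one_lt_two)
    have : (r - q) / Real.log 2 = 0 := by rw [← heq, ← h]; ring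
    have : r - q = 0 := by field_simp at this; linarith
    linarith
  · have hr' := hpos h
    by_contra hne
    have hne' : r / q ≠ 1 := by
      intro hc; apply hne; field_simp at hc; linarith
    have hlt : Real.log (r / q) < r / q - 1 :=
      Real.log_lt_sub_one_of_pos (by positivity) hne'
    have hlog : Real.logb 2 r - Real.logb 2 q = Real.log (r / q) / Real.log 2 := by
      unfold Real.logb
      rw [Real.log_div (ne_of_gt hr') (ne_of_gt h)]; ring
    have h2 : (0:ℝ) < Real.log 2 := Real.log_pos one_lt_two
    rw [hlog] at heq
    have hq' : q * Real.log (r / q) = r - q := by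
      have := heq
      rw [← mul_div_assoc, div_eq_div_iff (ne_of_gt h2) (ne_of_gt h2)] at this
      have := mul_right_cancel₀ (ne_of_gt h2) this
      linarith
    have hlt2 : q * Real.log (r / q) < q * (r / q - 1) :=
      mul_lt_mul_of_pos_left hlt h
    have he : q * (r / q - 1) = r - q := by field_simp
    linarith

/-- Gibbs inequality with equality case. -/
lemma gibbs {α : Type*} [Fintype α] (q r : α → ℝ) (hq0 : ∀ a, 0 ≤ q a) (hq1 : ∑ a, q a = 1)
    (hr0 : ∀ a, 0 ≤ r a) (hr1 : ∑ a, r a = 1)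
    (hpos : ∀ a, 0 < q a → 0 < r a) :
    (∑ a, q a * Real.logb 2 (r a) ≤ ∑ a, q a * Real.logb 2 (q a)) ∧
    ((∑ a, q a * Real.logb 2 (r a)) = (∑ a, q a * Real.logb 2 (q a)) → ∀ a, q a = r a) := by
  set d : α → ℝ := fun a => (r a - q a) / Real.log 2 - q a * (Real.logb 2 (r a) - Real.logb 2 (q a)) with hd
  have hd0 : ∀ a, 0 ≤ d a := fun a => sub_nonneg.2 (gibbs_term (hq0 a) (hr0 a) (hpos a))
  have hsum : ∑ a, d a = (∑ a, q a * Real.logb 2 (q a)) - ∑ a, q a * Real.logb 2 (r a) := by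
    rw [hd]; rw [Finset.sum_sub_distrib]
    have : ∑ a, (r a - q a) / Real.log 2 = 0 := by
      rw [← Finset.sum_div, Finset.sum_sub_distrib, hq1, hr1]; simp
    rw [this]
    rw [show ∀ f g : α → ℝ, ∑ a, (q a * (f a - g a)) = ∑ a, q a * f a - ∑ a, q a * g a from
      fun f g => by rw [← Finset.sum_sub_distrib]; apply Finset.sum_congr rfl; intros; ring]
    ring
  constructor
  · have : 0 ≤ ∑ a, d a := Finset.sum_nonneg fun a _ => hd0 a
    linarith [hsum]
  · intro heq
    have hz : ∑ a, d a = 0 := by rw [hsum, heq]; ring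
    have := (Finset.sum_eq_zero_iff_of_nonneg (fun a _ => hd0 a)).1 hz
    intro a
    have ha : d a = 0 := this a (Finset.mem_univ a)
    apply gibbs_term_eq (hq0 a) (hr0 a) (hpos a)
    rw [hd] at ha; simp only at ha; linarith

lemma pr_le_marg_right [Fintype α] (hp : IsPMF p) (X : Ω → α) (Y : Ω → β) (a : α) (b : β) :
    pr p (fun ω => (X ω, Y ω)) (a, b) ≤ pr p Y b := by
  rw [pr_marg_right X Y b]
  exact Finset.single_le_sum (f := fun a' => pr p (fun ω => (X ω, Y ω)) (a', b))
    (fun a' _ => pr_nonneg hp _ _) (Finset.mem_univ a)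

lemma pr_le_marg_left [Fintype β] (hp : IsPMF p) (X : Ω → α) (Y : Ω → β) (a : α) (b : β) :
    pr p (fun ω => (X ω, Y ω)) (a, b) ≤ pr p X a := by
  rw [pr_marg_left X Y a]
  exact Finset.single_le_sum (f := fun b' => pr p (fun ω => (X ω, Y ω)) (a, b'))
    (fun b' _ => pr_nonneg hp _ _) (Finset.mem_univ b)

/-- `H(Y) ≤ H(X,Y)`. -/
lemma ent_snd_le [Fintype α] [Fintype β] (hp : IsPMF p) (X : Ω → α) (Y : Ω → β) :
    ent p Y ≤ ent p (fun ω => (X ω, Y ω)) := by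
  rw [ent_eq, ent_eq, neg_le_neg_iff]
  have hY : ∀ b : β, pr p Y b * Real.logb 2 (pr p Y b)
      = ∑ a : α, pr p (fun ω => (X ω, Y ω)) (a, b) * Real.logb 2 (pr p Y b) := by
    intro b; rw [← Finset.sum_mul, ← pr_marg_right]
  calc ∑ ab : α × β, pr p (fun ω => (X ω, Y ω)) ab * Real.logb 2 (pr p (fun ω => (X ω, Y ω)) ab)
      ≤ ∑ ab : α × β, pr p (fun ω => (X ω, Y ω)) ab * Real.logb 2 (pr p Y ab.2) := by
        apply Finset.sum_le_sum; intro ab _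
        rcases eq_or_lt_of_le (pr_nonneg hp (fun ω => (X ω, Y ω)) ab) with h | h
        · rw [← h]; simp
        · apply mul_le_mul_of_nonneg_left ?_ (le_of_lt h)
          have hle := pr_le_marg_right hp X Y ab.1 ab.2
          rw [(by rfl : (ab.1, ab.2) = ab)] at hle
          exact (Real.logb_le_logb one_lt_two h (lt_of_lt_of_le h hle)).2 hle
    _ = ∑ b : β, pr p Y b * Real.logb 2 (pr p Y b) := by
        rw [Fintype.sum_prod_type_right]
        exact Finset.sum_congr rfl fun b _ => (hY b).symm

/-- Subadditivity of entropy with the independence equality case. -/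
lemma ent_pair_le [Fintype α] [Fintype β] (hp : IsPMF p) (X : Ω → α) (Y : Ω → β) :
    ent p (fun ω => (X ω, Y ω)) ≤ ent p X + ent p Y ∧
    (ent p (fun ω => (X ω, Y ω)) = ent p X + ent p Y →
      ∀ a b, pr p (fun ω => (X ω, Y ω)) (a, b) = pr p X a * pr p Y b) := by
  set q : α × β → ℝ := fun ab => pr p (fun ω => (X ω, Y ω)) ab with hqdef
  set r : α × β → ℝ := fun ab => pr p X ab.1 * pr p Y ab.2 with hrdef
  have hq0 : ∀ ab, 0 ≤ q ab := fun ab => pr_nonneg hp _ _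
  have hq1 : ∑ ab, q ab = 1 := sum_pr hp _
  have hr0 : ∀ ab, 0 ≤ r ab := fun ab => mul_nonneg (pr_nonneg hp _ _) (pr_nonneg hp _ _)
  have hr1 : ∑ ab, r ab = 1 := by
    rw [hrdef, Fintype.sum_prod_type]
    simp only [← Finset.sum_mul, ← Finset.mul_sum]
    rw [sum_pr hp X]
    simp [sum_pr hp Y]
  have hpos : ∀ ab, 0 < q ab → 0 < r ab := by
    intro ab h
    have h1 := lt_of_lt_of_le h (by simpa using pr_le_marg_left hp X Y ab.1 ab.2)
    have h2 := lt_of_lt_of_le h (by simpa using pr_le_marg_right hp X Y ab.1 ab.2)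
    exact mul_pos h1 h2
  have key : ∑ ab, q ab * Real.logb 2 (r ab)
      = -(ent p X) + -(ent p Y) := by
    have step : ∀ ab, q ab * Real.logb 2 (r ab)
        = q ab * Real.logb 2 (pr p X ab.1) + q ab * Real.logb 2 (pr p Y ab.2) := by
      intro ab
      rcases eq_or_lt_of_le (hq0 ab) with h | h
      · rw [← h]; ring
      · have := hpos ab h
        have h1 := lt_of_lt_of_le h (by simpa using pr_le_marg_left hp X Y ab.1 ab.2)
        have h2 := lt_of_lt_of_le h (by simpa using pr_le_marg_right hp X Y ab.1 ab.2)
        rw [hrdef]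
        simp only []
        rw [Real.logb_mul (ne_of_gt h1) (ne_of_gt h2)]
        ring
    rw [Finset.sum_congr rfl fun ab _ => step ab, Finset.sum_add_distrib]
    have hx : ∑ ab : α × β, q ab * Real.logb 2 (pr p X ab.1)
        = ∑ a : α, pr p X a * Real.logb 2 (pr p X a) := by
      rw [Fintype.sum_prod_type]
      apply Finset.sum_congr rfl; intro a _
      simp only [hqdef]
      rw [← Finset.sum_mul, ← pr_marg_left]
    have hy : ∑ ab : α × β, q ab * Real.logb 2 (pr p Y ab.2)
        = ∑ b : β, pr p Y b * Real.logb 2 (pr p Y b) := by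
      rw [Fintype.sum_prod_type_right]
      apply Finset.sum_congr rfl; intro b _
      simp only [hqdef]
      rw [← Finset.sum_mul, ← pr_marg_right]
    rw [hx, hy, ent_eq X, ent_eq Y]; ring
  obtain ⟨hle, heqc⟩ := gibbs q r hq0 hq1 hr0 hr1 hpos
  constructor
  · rw [ent_eq (fun ω => (X ω, Y ω))]
    rw [key] at hle
    linarith
  · intro heq a b
    have : ∑ ab, q ab * Real.logb 2 (r ab) = ∑ ab, q ab * Real.logb 2 (q ab) := by
      rw [key]
      have h2 : ∑ ab, q ab * Real.logb 2 (q ab)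
          = -(ent p (fun ω => (X ω, Y ω))) := by
        rw [ent_eq (fun ω => (X ω, Y ω))]; rw [hqdef]; ring
      rw [h2, heq]; ring
    exact heqc this (a, b)

/-- `H(X) ≤ 1` for a boolean random variable. -/
lemma ent_bool_le (hp : IsPMF p) (X : Ω → Bool) : ent p X ≤ 1 := by
  have h := (gibbs (fun b => pr p X b) (fun _ => 1/2) (fun b => pr_nonneg hp X b)
    (sum_pr hp X) (fun _ => by norm_num) (by simp) (fun _ _ => by norm_num)).1
  have hl : Real.logb 2 (1/2 : ℝ) = -1 := by
    rw [one_div, Real.logb_inv]; simp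
  rw [ent_eq]
  have : ∑ b : Bool, pr p X b * Real.logb 2 (1/2 : ℝ) = -1 := by
    rw [← Finset.sum_mul, sum_pr hp X, hl]; ring
  rw [this] at h
  linarith

end AuxLemmas

set_option maxHeartbeats 2000000 in
/-- **Example 2, converse part (first step).**  If `(S,V,X₁,X₂)` has the inner-bound
product form `Q_S(s₀,s₁)·P_{X₂}(x₂)·P_{X₁|X₂}(x₁|x₂)·P_{V|S,X₂}(v|s₀,s₁,x₂)` (with `Q_S`
the law of the i.i.d. pair `(S₀,S₁)`), `Y = (X₁ ⊕ S_{X₁⊕X₂}, X₂)` and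
`I(X₁;Y|V,X₂) ≥ 1`, then `H(X₁) = 1`, `X₁` is independent of `(S,V,X₂)` and
`H(S_{X₁⊕X₂} | V,X₁,X₂) = 0`. -/
theorem example2_inner_bound_consequences
    {Ω 𝒱 : Type*} [Fintype Ω] [Fintype 𝒱]
    (p₀ : ℝ) (h₀ : 0 ≤ p₀) (h₁ : p₀ ≤ 1/2) (hh : binEnt p₀ = 1/2)
    (p : Ω → ℝ) (hp : IsPMF p)
    (S : Ω → Bool × Bool) (V : Ω → 𝒱) (X₁ X₂ : Ω → Bool) (Y : Ω → Bool × Bool)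
    (hform : ∃ (PX2 : Bool → ℝ) (PX12 : Bool → Bool → ℝ) (PV : Bool × Bool → Bool → 𝒱 → ℝ),
      (∀ x2, 0 ≤ PX2 x2) ∧ (∑ x2, PX2 x2 = 1) ∧
      (∀ x1 x2, 0 ≤ PX12 x1 x2) ∧ (∀ x2, ∑ x1, PX12 x1 x2 = 1) ∧
      (∀ s x2 v, 0 ≤ PV s x2 v) ∧ (∀ s x2, ∑ v, PV s x2 v = 1) ∧
      (∀ s v x1 x2, pr p (fun ω => (S ω, V ω, X₁ ω, X₂ ω)) (s, v, x1, x2)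
          = QS2 p₀ s * PX2 x2 * PX12 x1 x2 * PV s x2 v))
    (hY : ∀ ω, Y ω = (Bool.xor (X₁ ω) (if X₁ ω = X₂ ω then (S ω).1 else (S ω).2), X₂ ω))
    (hI : 1 ≤ cmi p X₁ Y (fun ω => (V ω, X₂ ω))) :
    ent p X₁ = 1 ∧
    IndepRV p X₁ (fun ω => (S ω, V ω, X₂ ω)) ∧
    condEnt p (fun ω => if X₁ ω = X₂ ω then (S ω).1 else (S ω).2)
      (fun ω => (V ω, X₁ ω, X₂ ω)) = 0 := by
  obtain ⟨PX2, PX12, PV, hPX2_0, hPX2_1, hPX12_0, hPX12_1, hPV0, hPV1, hj⟩ := hform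
  have hxor : ∀ a b c : Bool, Bool.xor a b = Bool.xor a c → b = c := by decide
  -- injective relabelings
  have hg2 : Function.Injective
      (fun q : Bool × 𝒱 × Bool => ((q.1, q.2.2), q.2.1, q.2.2) :
        Bool × 𝒱 × Bool → (Bool × Bool) × 𝒱 × Bool) := by
    rintro ⟨y1, v, x2⟩ ⟨y1', v', x2'⟩ h
    simp only [Prod.mk.injEq] at h ⊢; tauto
  have hg3 : Function.Injective
      (fun q : Bool × Bool × 𝒱 × Bool =>
        (q.1, (Bool.xor q.1 q.2.1, q.2.2.2), q.2.2.1, q.2.2.2) :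
        Bool × Bool × 𝒱 × Bool → Bool × (Bool × Bool) × 𝒱 × Bool) := by
    rintro ⟨x1, t, v, x2⟩ ⟨x1', t', v', x2'⟩ h
    simp only [Prod.mk.injEq] at h ⊢
    obtain ⟨h1, ⟨h2, h3⟩, h4, h5⟩ := h
    subst h1
    exact ⟨rfl, hxor _ _ _ h2, h4, h5⟩
  have hg4 : Function.Injective
      (fun q : Bool × Bool × 𝒱 × Bool => (q.1, Bool.xor q.1 q.2.1, q.2.2) :
        Bool × Bool × 𝒱 × Bool → Bool × Bool × 𝒱 × Bool) := by
    rintro ⟨x1, t, v, x2⟩ ⟨x1', t', v', x2'⟩ h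
    simp only [Prod.mk.injEq] at h ⊢
    obtain ⟨h1, h2, h3⟩ := h
    subst h1
    exact ⟨rfl, hxor _ _ _ h2, h3⟩
  have hg5 : Function.Injective
      (fun q : Bool × Bool × 𝒱 × Bool => (q.2.1, q.1, q.2.2) :
        Bool × Bool × 𝒱 × Bool → Bool × Bool × 𝒱 × Bool) := by
    rintro ⟨x1, t, v, x2⟩ ⟨x1', t', v', x2'⟩ h
    simp only [Prod.mk.injEq] at h ⊢; tauto
  have hg6 : Function.Injective
      (fun q : Bool × 𝒱 × Bool × Bool => (q.2.2.1, q.1, q.2.1, q.2.2.2) :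
        Bool × 𝒱 × Bool × Bool → Bool × Bool × 𝒱 × Bool) := by
    rintro ⟨t, v, x1, x2⟩ ⟨t', v', x1', x2'⟩ h
    simp only [Prod.mk.injEq] at h ⊢; tauto
  have hg7 : Function.Injective
      (fun q : 𝒱 × Bool × Bool => (q.2.1, q.1, q.2.2) :
        𝒱 × Bool × Bool → Bool × 𝒱 × Bool) := by
    rintro ⟨v, x1, x2⟩ ⟨v', x1', x2'⟩ h
    simp only [Prod.mk.injEq] at h ⊢; tauto
  have hg8 : Function.Injective
      (fun q : ((Bool × Bool) × 𝒱) × (Bool × Bool) => (q.1.1, q.1.2, q.2.1, q.2.2) :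
        ((Bool × Bool) × 𝒱) × (Bool × Bool) → (Bool × Bool) × 𝒱 × Bool × Bool) := by
    rintro ⟨⟨s, v⟩, ⟨x1, x2⟩⟩ ⟨⟨s', v'⟩, ⟨x1', x2'⟩⟩ h
    simp only [Prod.mk.injEq] at h ⊢; tauto
  have hg9 : Function.Injective
      (fun q : (Bool × Bool) × 𝒱 × Bool × Bool => (q.2.2.1, (q.1, q.2.1, q.2.2.2)) :
        (Bool × Bool) × 𝒱 × Bool × Bool → Bool × ((Bool × Bool) × 𝒱 × Bool)) := by
    rintro ⟨s, v, x1, x2⟩ ⟨s', v', x1', x2'⟩ h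
    simp only [Prod.mk.injEq] at h ⊢; tauto
  have hg10 : Function.Injective
      (fun q : (Bool × Bool) × 𝒱 => (q.1.1, (q.2, q.1.2)) :
        (Bool × Bool) × 𝒱 → Bool × (𝒱 × Bool)) := by
    rintro ⟨⟨x1, x2⟩, v⟩ ⟨⟨x1', x2'⟩, v'⟩ h
    simp only [Prod.mk.injEq] at h ⊢; tauto
  -- sum of the state pmf
  have hQS : ∑ s : Bool × Bool, QS2 p₀ s = 1 := by
    simp [QS2, Fintype.sum_prod_type]; ring
  -- joint law in regrouped form
  have hW : ∀ (sv : (Bool × Bool) × 𝒱) (x1 x2 : Bool),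
      pr p (fun ω => ((S ω, V ω), (X₁ ω, X₂ ω))) (sv, (x1, x2))
        = QS2 p₀ sv.1 * PX2 x2 * PX12 x1 x2 * PV sv.1 x2 sv.2 := by
    rintro ⟨s, v⟩ x1 x2
    rw [← hj s v x1 x2]
    exact (pr_comp hg8 (fun ω => ((S ω, V ω), (X₁ ω, X₂ ω))) ((s, v), (x1, x2))).symm
  -- marginal of (X₁, X₂)
  have hM2 : ∀ x1 x2 : Bool,
      pr p (fun ω => (X₁ ω, X₂ ω)) (x1, x2) = PX2 x2 * PX12 x1 x2 := by
    intro x1 x2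
    have ha : pr p (fun ω => (X₁ ω, X₂ ω)) (x1, x2)
        = ∑ sv : (Bool × Bool) × 𝒱,
            pr p (fun ω => ((S ω, V ω), (X₁ ω, X₂ ω))) (sv, (x1, x2)) :=
      pr_marg_right _ _ _
    rw [ha, Finset.sum_congr rfl fun sv _ => hW sv x1 x2]
    rw [Fintype.sum_prod_type]
    have hs : ∀ s : Bool × Bool,
        ∑ v : 𝒱, QS2 p₀ s * PX2 x2 * PX12 x1 x2 * PV s x2 v
          = QS2 p₀ s * (PX2 x2 * PX12 x1 x2) := by
      intro s
      rw [show ∀ f : 𝒱 → ℝ, ∑ v, QS2 p₀ s * PX2 x2 * PX12 x1 x2 * f v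
          = QS2 p₀ s * PX2 x2 * PX12 x1 x2 * ∑ v, f v from fun f => by rw [Finset.mul_sum]]
      rw [hPV1 s x2]; ring
    rw [Finset.sum_congr rfl fun s _ => hs s, ← Finset.sum_mul, hQS, one_mul]
  -- marginal of X₂
  have hM1 : ∀ x2 : Bool, pr p X₂ x2 = PX2 x2 := by
    intro x2
    have ha : pr p X₂ x2 = ∑ x1 : Bool, pr p (fun ω => (X₁ ω, X₂ ω)) (x1, x2) :=
      pr_marg_right _ _ _
    rw [ha, Finset.sum_congr rfl fun x1 _ => hM2 x1 x2, ← Finset.mul_sum, hPX12_1, mul_one]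
  -- joint of (X₁, (S, V, X₂))
  have hM5 : ∀ (x1 : Bool) (s : Bool × Bool) (v : 𝒱) (x2 : Bool),
      pr p (fun ω => (X₁ ω, (S ω, V ω, X₂ ω))) (x1, (s, v, x2))
        = QS2 p₀ s * PX2 x2 * PX12 x1 x2 * PV s x2 v := by
    intro x1 s v x2
    rw [← hj s v x1 x2]
    exact pr_comp hg9 (fun ω => (S ω, V ω, X₁ ω, X₂ ω)) (s, v, x1, x2)
  -- marginal of (S, V, X₂)
  have hM4 : ∀ (s : Bool × Bool) (v : 𝒱) (x2 : Bool),
      pr p (fun ω => (S ω, V ω, X₂ ω)) (s, v, x2)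
        = QS2 p₀ s * PX2 x2 * PV s x2 v := by
    intro s v x2
    have ha : pr p (fun ω => (S ω, V ω, X₂ ω)) (s, v, x2)
        = ∑ x1 : Bool, pr p (fun ω => (X₁ ω, (S ω, V ω, X₂ ω))) (x1, (s, v, x2)) :=
      pr_marg_right _ _ _
    rw [ha, Finset.sum_congr rfl fun x1 _ => hM5 x1 s v x2]
    rw [show ∀ f : Bool → ℝ, (∑ x1 : Bool, QS2 p₀ s * PX2 x2 * f x1 * PV s x2 v)
        = QS2 p₀ s * PX2 x2 * PV s x2 v * ∑ x1, f x1 from fun f => by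
      rw [Finset.mul_sum]; apply Finset.sum_congr rfl; intros; ring]
    rw [hPX12_1, mul_one]
  -- entropy identities by relabeling
  have hE1 : ent p (fun ω => (Y ω, V ω, X₂ ω))
      = ent p (fun ω => (Bool.xor (X₁ ω) (if X₁ ω = X₂ ω then (S ω).1 else (S ω).2), V ω, X₂ ω)) := by
    rw [show (fun ω => (Y ω, V ω, X₂ ω))
        = (fun ω => ((Bool.xor (X₁ ω) (if X₁ ω = X₂ ω then (S ω).1 else (S ω).2), X₂ ω), V ω, X₂ ω)) from
      funext fun ω => by rw [hY ω]]
    exact ent_comp hg2 (fun ω => (Bool.xor (X₁ ω) (if X₁ ω = X₂ ω then (S ω).1 else (S ω).2), V ω, X₂ ω))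
  have hE2 : ent p (fun ω => (X₁ ω, Y ω, V ω, X₂ ω))
      = ent p (fun ω => (X₁ ω, if X₁ ω = X₂ ω then (S ω).1 else (S ω).2, V ω, X₂ ω)) := by
    rw [show (fun ω => (X₁ ω, Y ω, V ω, X₂ ω))
        = (fun ω => (X₁ ω, (Bool.xor (X₁ ω) (if X₁ ω = X₂ ω then (S ω).1 else (S ω).2), X₂ ω), V ω, X₂ ω)) from
      funext fun ω => by rw [hY ω]]
    exact ent_comp hg3 (fun ω => (X₁ ω, if X₁ ω = X₂ ω then (S ω).1 else (S ω).2, V ω, X₂ ω))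
  have hcmi : cmi p X₁ Y (fun ω => (V ω, X₂ ω))
      = ent p (fun ω => (X₁ ω, V ω, X₂ ω)) + ent p (fun ω => (Y ω, V ω, X₂ ω))
        - ent p (fun ω => (X₁ ω, Y ω, V ω, X₂ ω)) - ent p (fun ω => (V ω, X₂ ω)) := rfl
  have hI' : 1 ≤ ent p (fun ω => (X₁ ω, V ω, X₂ ω))
      + ent p (fun ω => (Bool.xor (X₁ ω) (if X₁ ω = X₂ ω then (S ω).1 else (S ω).2), V ω, X₂ ω))
      - ent p (fun ω => (X₁ ω, if X₁ ω = X₂ ω then (S ω).1 else (S ω).2, V ω, X₂ ω))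
      - ent p (fun ω => (V ω, X₂ ω)) := by
    rw [hcmi, hE1, hE2] at hI; exact hI
  -- inequalities
  have hEd : ent p (fun ω => (Bool.xor (X₁ ω) (if X₁ ω = X₂ ω then (S ω).1 else (S ω).2), V ω, X₂ ω))
      ≤ ent p (fun ω => (X₁ ω, if X₁ ω = X₂ ω then (S ω).1 else (S ω).2, V ω, X₂ ω)) :=
    calc ent p (fun ω => (Bool.xor (X₁ ω) (if X₁ ω = X₂ ω then (S ω).1 else (S ω).2), V ω, X₂ ω))
        ≤ ent p (fun ω => (X₁ ω, Bool.xor (X₁ ω) (if X₁ ω = X₂ ω then (S ω).1 else (S ω).2), V ω, X₂ ω)) :=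
          ent_snd_le hp X₁ (fun ω => (Bool.xor (X₁ ω) (if X₁ ω = X₂ ω then (S ω).1 else (S ω).2), V ω, X₂ ω))
      _ = ent p (fun ω => (X₁ ω, if X₁ ω = X₂ ω then (S ω).1 else (S ω).2, V ω, X₂ ω)) :=
          ent_comp hg4 (fun ω => (X₁ ω, if X₁ ω = X₂ ω then (S ω).1 else (S ω).2, V ω, X₂ ω))
  have hEc : ent p (fun ω => (X₁ ω, V ω, X₂ ω))
      ≤ ent p (fun ω => (X₁ ω, if X₁ ω = X₂ ω then (S ω).1 else (S ω).2, V ω, X₂ ω)) :=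
    calc ent p (fun ω => (X₁ ω, V ω, X₂ ω))
        ≤ ent p (fun ω => (if X₁ ω = X₂ ω then (S ω).1 else (S ω).2, X₁ ω, V ω, X₂ ω)) :=
          ent_snd_le hp (fun ω => if X₁ ω = X₂ ω then (S ω).1 else (S ω).2) (fun ω => (X₁ ω, V ω, X₂ ω))
      _ = ent p (fun ω => (X₁ ω, if X₁ ω = X₂ ω then (S ω).1 else (S ω).2, V ω, X₂ ω)) :=
          (ent_comp hg5 (fun ω => (if X₁ ω = X₂ ω then (S ω).1 else (S ω).2, X₁ ω, V ω, X₂ ω))).symm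
  have hCp := ent_pair_le hp X₁ (fun ω => (V ω, X₂ ω))
  have hC : ent p (fun ω => (X₁ ω, V ω, X₂ ω))
      ≤ ent p X₁ + ent p (fun ω => (V ω, X₂ ω)) := hCp.1
  have hD : ent p (fun ω => (Bool.xor (X₁ ω) (if X₁ ω = X₂ ω then (S ω).1 else (S ω).2), V ω, X₂ ω))
      ≤ ent p (fun ω => Bool.xor (X₁ ω) (if X₁ ω = X₂ ω then (S ω).1 else (S ω).2)) + ent p (fun ω => (V ω, X₂ ω)) :=
    (ent_pair_le hp (fun ω => Bool.xor (X₁ ω) (if X₁ ω = X₂ ω then (S ω).1 else (S ω).2)) (fun ω => (V ω, X₂ ω))).1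
  have hA : ent p X₁ ≤ 1 := ent_bool_le hp X₁
  have hF : ent p (fun ω => Bool.xor (X₁ ω) (if X₁ ω = X₂ ω then (S ω).1 else (S ω).2)) ≤ 1 := ent_bool_le hp _
  -- the equalities forced by hI'
  have hA1 : ent p X₁ = 1 := by linarith
  have hCeq : ent p (fun ω => (X₁ ω, V ω, X₂ ω))
      = ent p X₁ + ent p (fun ω => (V ω, X₂ ω)) := by linarith
  have hEC : ent p (fun ω => (X₁ ω, if X₁ ω = X₂ ω then (S ω).1 else (S ω).2, V ω, X₂ ω))
      = ent p (fun ω => (X₁ ω, V ω, X₂ ω)) := by linarith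
  -- independence of X₁ and (V, X₂)
  have hIndVX : ∀ (x : Bool) (z : 𝒱 × Bool),
      pr p (fun ω => (X₁ ω, (V ω, X₂ ω))) (x, z)
        = pr p X₁ x * pr p (fun ω => (V ω, X₂ ω)) z := fun x z => hCp.2 hCeq x z
  -- hence X₁ ⟂ X₂
  have hXX : ∀ x1 x2 : Bool,
      pr p (fun ω => (X₁ ω, X₂ ω)) (x1, x2) = pr p X₁ x1 * pr p X₂ x2 := by
    intro x1 x2
    have ha : pr p (fun ω => (X₁ ω, X₂ ω)) (x1, x2)
        = ∑ v : 𝒱, pr p (fun ω => ((X₁ ω, X₂ ω), V ω)) ((x1, x2), v) :=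
      pr_marg_left _ _ _
    have hb : ∀ v : 𝒱, pr p (fun ω => ((X₁ ω, X₂ ω), V ω)) ((x1, x2), v)
        = pr p (fun ω => (X₁ ω, (V ω, X₂ ω))) (x1, (v, x2)) :=
      fun v => (pr_comp hg10 (fun ω => ((X₁ ω, X₂ ω), V ω)) ((x1, x2), v)).symm
    have hc : pr p X₂ x2 = ∑ v : 𝒱, pr p (fun ω => (V ω, X₂ ω)) (v, x2) :=
      pr_marg_right _ _ _
    rw [ha, Finset.sum_congr rfl fun v _ => hb v,
      Finset.sum_congr rfl fun v _ => hIndVX x1 (v, x2), ← Finset.mul_sum, ← hc]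
  have key : ∀ x1 x2 : Bool, PX2 x2 * PX12 x1 x2 = pr p X₁ x1 * PX2 x2 := by
    intro x1 x2
    rw [← hM2 x1 x2, ← hM1 x2]
    exact hXX x1 x2
  refine ⟨hA1, ?_, ?_⟩
  · -- independence of X₁ and (S, V, X₂)
    rintro x1 ⟨s, v, x2⟩
    rw [hM5 x1 s v x2, hM4 s v x2]
    have := key x1 x2
    linear_combination QS2 p₀ s * PV s x2 v * this
  · -- vanishing conditional entropy
    have hd1 : condEnt p (fun ω => if X₁ ω = X₂ ω then (S ω).1 else (S ω).2) (fun ω => (V ω, X₁ ω, X₂ ω))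
        = ent p (fun ω => (if X₁ ω = X₂ ω then (S ω).1 else (S ω).2, V ω, X₁ ω, X₂ ω))
          - ent p (fun ω => (V ω, X₁ ω, X₂ ω)) := rfl
    have hd2 : ent p (fun ω => (X₁ ω, if X₁ ω = X₂ ω then (S ω).1 else (S ω).2, V ω, X₂ ω))
        = ent p (fun ω => (if X₁ ω = X₂ ω then (S ω).1 else (S ω).2, V ω, X₁ ω, X₂ ω)) :=
      ent_comp hg6 (fun ω => (if X₁ ω = X₂ ω then (S ω).1 else (S ω).2, V ω, X₁ ω, X₂ ω))
    have hd3 : ent p (fun ω => (X₁ ω, V ω, X₂ ω))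
        = ent p (fun ω => (V ω, X₁ ω, X₂ ω)) :=
      ent_comp hg7 (fun ω => (V ω, X₁ ω, X₂ ω))
    rw [hd1, ← hd2, ← hd3, hEC]
    ring
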